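/- Let E be a real inner product space and let f⁰, f¹ : E → ℝ both be L-smooth for some L ≥ 0. Fix ω ∈ E with ∇₀ := ‖∇f⁰(ω)‖ > 0 and ∇₁ := ‖∇f¹(ω)‖ > 0, set c = ⟨∇f⁰(ω), ∇f¹(ω)⟩, cos θ = c/(∇₀∇₁), S = ‖∇f⁰(ω) + ∇f¹(ω)‖², and assume S > 0. Let η > 0 satisfy ηL ≤ 2(min(∇₀², ∇₁²) + c)/S, let n₀, n₁ > 0 be the class sizes, let r = ∇₀/∇₁, and set ω' = ω − η(∇f⁰(ω) + ∇f¹(ω)). Then the speed gap Δ := (f⁰(ω) − f⁰(ω'))/n₀ − (f¹(ω) − f¹(ω'))/n₁ satisfies Δ ≤ (η∇₁²/n₀)·(r² + 2r·cos θ + 1). -/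

import Mathlib

open RealInnerProductSpace

lemma descent_lemma {E : Type*} [NormedAddCommGroup E]
    [InnerProductSpace ℝ E] [CompleteSpace E]
    (f : E → ℝ) (hf : Differentiable ℝ f) (L : ℝ) (hL : 0 ≤ L)
    (hlip : ∀ x y : E, ‖gradient f x - gradient f y‖ ≤ L * ‖x - y‖)
    (x v : E) :
    |f (x + v) - f x - ⟪gradient f x, v⟫| ≤ L / 2 * ‖v‖ ^ 2 := by
  -- g t = f (x + t • v)
  have hderiv : ∀ t : ℝ, HasDerivAt (fun t : ℝ => f (x + t • v))
      ⟪gradient f (x + t • v), v⟫ t := by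
    intro t
    have h1 : HasFDerivAt f (InnerProductSpace.toDual ℝ E (gradient f (x + t • v)))
        (x + t • v) := (hf (x + t • v)).hasGradientAt
    have h2 : HasDerivAt (fun t : ℝ => x + t • v) v t := by
      simpa using ((hasDerivAt_id t).smul_const v).const_add x
    exact h1.comp_hasDerivAt t h2
  have hcont : Continuous fun y : E => gradient f y := by
    have : LipschitzWith (Real.toNNReal L) (gradient f) := by
      apply LipschitzWith.of_dist_le_mul
      intro y z
      rw [dist_eq_norm, dist_eq_norm, Real.coe_toNNReal L hL]
      exact hlip y z
    exact this.continuous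
  have hcontg : Continuous fun t : ℝ => ⟪gradient f (x + t • v), v⟫ := by
    exact (hcont.comp (by continuity)).inner continuous_const
  have hint : f (x + v) - f x = ∫ t in (0:ℝ)..1, ⟪gradient f (x + t • v), v⟫ := by
    rw [intervalIntegral.integral_eq_sub_of_hasDerivAt (fun t _ => hderiv t)
      (hcontg.intervalIntegrable 0 1)]
    simp
  have hsub : f (x + v) - f x - ⟪gradient f x, v⟫
      = ∫ t in (0:ℝ)..1, (⟪gradient f (x + t • v), v⟫ - ⟪gradient f x, v⟫) := by
    rw [intervalIntegral.integral_sub (hcontg.intervalIntegrable 0 1)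
      (intervalIntegrable_const), hint]
    simp
  rw [hsub]
  have hbound : ∀ t ∈ Set.Icc (0:ℝ) 1,
      ‖⟪gradient f (x + t • v), v⟫ - ⟪gradient f x, v⟫‖ ≤ L * t * ‖v‖ ^ 2 := by
    intro t ht
    have := inner_sub_left (𝕜 := ℝ) (gradient f (x + t • v)) (gradient f x) v
    rw [← this]
    calc ‖⟪gradient f (x + t • v) - gradient f x, v⟫‖
        ≤ ‖gradient f (x + t • v) - gradient f x‖ * ‖v‖ := norm_inner_le_norm _ _
      _ ≤ (L * ‖(x + t • v) - x‖) * ‖v‖ := by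
          gcongr; exact hlip _ _
      _ = L * t * ‖v‖ ^ 2 := by
          rw [add_sub_cancel_left, norm_smul, Real.norm_eq_abs, abs_of_nonneg ht.1]
          ring
  have hbint : IntervalIntegrable (fun t : ℝ => L * t * ‖v‖ ^ 2) MeasureTheory.volume 0 1 :=
    (Continuous.intervalIntegrable (by continuity) 0 1)
  calc |∫ t in (0:ℝ)..1, (⟪gradient f (x + t • v), v⟫ - ⟪gradient f x, v⟫)|
      ≤ |∫ t in (0:ℝ)..1, L * t * ‖v‖ ^ 2| := by
        rw [← Real.norm_eq_abs]
        apply intervalIntegral.norm_integral_le_abs_of_norm_le _ hbint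
        filter_upwards [MeasureTheory.ae_restrict_mem measurableSet_uIoc] with t ht
        have ht' : t ∈ Set.Icc (0:ℝ) 1 := by
          rcases ht with ht; rw [Set.uIoc_of_le (by norm_num)] at ht
          exact ⟨le_of_lt ht.1, ht.2⟩
        exact hbound t ht'
    _ = L / 2 * ‖v‖ ^ 2 := by
        rw [abs_of_nonneg (by
          apply intervalIntegral.integral_nonneg (by norm_num)
          intro u hu
          exact mul_nonneg (mul_nonneg hL hu.1) (sq_nonneg _))]
        rw [intervalIntegral.integral_mul_const, intervalIntegral.integral_const_mul,
          integral_id]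
        ring

set_option maxHeartbeats 1000000 in
/-- The paper's upper bound (Eq. (20)) on the speed gap
`Δ = (f⁰(ω) - f⁰(ω'))/n₀ - (f¹(ω) - f¹(ω'))/n₁` under one gradient-descent step:
`Δ ≤ (η∇₁²/n₀)(r² + 2r·cos θ + 1)`. -/
theorem speed_gap_upper_bound {E : Type*} [NormedAddCommGroup E]
    [InnerProductSpace ℝ E] [CompleteSpace E]
    (f0 f1 : E → ℝ) (hf0 : Differentiable ℝ f0) (hf1 : Differentiable ℝ f1)
    (L : ℝ) (hL : 0 ≤ L)
    (h0 : ∀ x y : E, ‖gradient f0 x - gradient f0 y‖ ≤ L * ‖x - y‖)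
    (h1 : ∀ x y : E, ‖gradient f1 x - gradient f1 y‖ ≤ L * ‖x - y‖)
    (ω : E)
    (hg0 : 0 < ‖gradient f0 ω‖) (hg1 : 0 < ‖gradient f1 ω‖)
    (hS : 0 < ‖gradient f0 ω + gradient f1 ω‖ ^ 2)
    (η : ℝ) (hη : 0 < η)
    (hηL : η * L ≤
      2 * (min (‖gradient f0 ω‖ ^ 2) (‖gradient f1 ω‖ ^ 2) +
          ⟪gradient f0 ω, gradient f1 ω⟫) /
        ‖gradient f0 ω + gradient f1 ω‖ ^ 2)
    (n0 n1 : ℝ) (hn0 : 0 < n0) (hn1 : 0 < n1)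
    (ω' : E) (hω' : ω' = ω - η • (gradient f0 ω + gradient f1 ω)) :
    (f0 ω - f0 ω') / n0 - (f1 ω - f1 ω') / n1 ≤
      η * ‖gradient f1 ω‖ ^ 2 / n0 *
        ((‖gradient f0 ω‖ / ‖gradient f1 ω‖) ^ 2 +
          2 * (‖gradient f0 ω‖ / ‖gradient f1 ω‖) *
            (⟪gradient f0 ω, gradient f1 ω⟫ /
              (‖gradient f0 ω‖ * ‖gradient f1 ω‖)) + 1) := by

  have hn0' : n0 ≠ 0 := ne_of_gt hn0
  set g0 := gradient f0 ω with hg0def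
  set g1 := gradient f1 ω with hg1def
  set v := -(η • (g0 + g1)) with hvdef
  have hω'' : ω' = ω + v := by rw [hω', hvdef, sub_eq_add_neg]
  have hN0 : ‖g0‖ ≠ 0 := ne_of_gt hg0
  have hN1 : ‖g1‖ ≠ 0 := ne_of_gt hg1
  have hv2 : ‖v‖ ^ 2 = η ^ 2 * ‖g0 + g1‖ ^ 2 := by
    rw [hvdef, norm_neg, norm_smul, Real.norm_eq_abs, abs_of_pos hη, mul_pow]
  have hinner0 : ⟪g0, v⟫ = -(η * (‖g0‖ ^ 2 + ⟪g0, g1⟫)) := by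
    rw [hvdef, inner_neg_right, real_inner_smul_right, inner_add_right,
      real_inner_self_eq_norm_sq]
  have hinner1 : ⟪g1, v⟫ = -(η * (⟪g0, g1⟫ + ‖g1‖ ^ 2)) := by
    rw [hvdef, inner_neg_right, real_inner_smul_right, inner_add_right,
      real_inner_self_eq_norm_sq, real_inner_comm g1 g0]
  have hA := descent_lemma f0 hf0 L hL h0 ω v
  have hB := descent_lemma f1 hf1 L hL h1 ω v
  rw [abs_le] at hA hB
  have hm : η * L * ‖g0 + g1‖ ^ 2 ≤ 2 * (min (‖g0‖ ^ 2) (‖g1‖ ^ 2) + ⟪g0, g1⟫) :=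
    (le_div_iff₀ hS).mp hηL
  have hkey : L / 2 * ‖v‖ ^ 2 ≤ η * (min (‖g0‖ ^ 2) (‖g1‖ ^ 2) + ⟪g0, g1⟫) := by
    rw [hv2]
    nlinarith [mul_le_mul_of_nonneg_left hm hη.le]
  have hminle : min (‖g0‖ ^ 2) (‖g1‖ ^ 2) ≤ ‖g1‖ ^ 2 := min_le_right _ _
  have hmul := mul_le_mul_of_nonneg_left hminle hη.le
  have hA' : f0 ω - f0 ω' ≤ η * (‖g0‖ ^ 2 + 2 * ⟪g0, g1⟫ + ‖g1‖ ^ 2) := by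
    rw [hω'']
    nlinarith [hA.1]
  have hB' : 0 ≤ f1 ω - f1 ω' := by
    rw [hω'']
    nlinarith [hB.2]
  have hRHS : η * ‖g1‖ ^ 2 / n0 *
      ((‖g0‖ / ‖g1‖) ^ 2 + 2 * (‖g0‖ / ‖g1‖) * (⟪g0, g1⟫ / (‖g0‖ * ‖g1‖)) + 1)
      = η * (‖g0‖ ^ 2 + 2 * ⟪g0, g1⟫ + ‖g1‖ ^ 2) / n0 := by
    field_simp
  rw [hRHS]
  have h1pos : 0 ≤ (f1 ω - f1 ω') / n1 := div_nonneg hB' hn1.le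
  have : (f0 ω - f0 ω') / n0 ≤ η * (‖g0‖ ^ 2 + 2 * ⟪g0, g1⟫ + ‖g1‖ ^ 2) / n0 := by
    gcongr
  linarith
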